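/- Under Assumptions A1–A4 (with ℓ(y,·) convex and twice continuously differentiable and r0 replaced, in the smoothed problems, by a convex smooth approximation), the full-data and leave-one-out estimators satisfy, for every i, ‖β̂ − β̂_{/i}‖₂ ≤ |ℓ̇_i(β̂_{/i})| · ‖x_i‖₂ / (min{2λη, 1}), where ℓ̇_i(β) = ∂ℓ(y_i, z)/∂z evaluated at z = x_iᵀβ. -/

import Mathlib

open scoped RealInnerProductSpace NNReal

private lemma subgrad_ineq (f : ℝ → ℝ) (hconv : ConvexOn ℝ Set.univ f)
    (hd : Differentiable ℝ f) (a b : ℝ) : f a + deriv f a * (b - a) ≤ f b := by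
  rcases lt_trichotomy a b with h | rfl | h
  · have hs := hconv.deriv_le_slope (Set.mem_univ a) (Set.mem_univ b) h (hd a)
    rw [slope_def_field] at hs
    have hba : (0:ℝ) < b - a := by linarith
    rw [le_div_iff₀ hba] at hs
    linarith
  · simp
  · have hs := hconv.slope_le_deriv (Set.mem_univ b) (Set.mem_univ a) h (hd a)
    rw [slope_def_field] at hs
    have hab : (0:ℝ) < a - b := by linarith
    rw [div_le_iff₀ hab] at hs
    nlinarith

private lemma norm_combo {E : Type*} [NormedAddCommGroup E] [InnerProductSpace ℝ E]
    (x z : E) (t : ℝ) :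
    ‖(1 - t) • x + t • z‖ ^ 2
      = (1 - t) * ‖x‖ ^ 2 + t * ‖z‖ ^ 2 - t * (1 - t) * ‖z - x‖ ^ 2 := by
  have h1 : ∀ v : E, ‖v‖ ^ 2 = ⟪v, v⟫ := fun v => (real_inner_self_eq_norm_sq v).symm
  simp only [h1, inner_add_left, inner_add_right, inner_smul_left, inner_smul_right,
    inner_sub_left, inner_sub_right, RCLike.conj_to_real, real_inner_comm z x]
  ring

private lemma strong_min {E : Type*} [NormedAddCommGroup E] [InnerProductSpace ℝ E]
    {s : Set E} (hs : Convex ℝ s) {C : E → ℝ} (hC : ConvexOn ℝ Set.univ C)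
    {μ : ℝ} (hμ : 0 ≤ μ) {x : E} (hx : x ∈ s)
    (hmin : IsMinOn (fun β => C β + μ * ‖β‖ ^ 2) s x) {z : E} (hz : z ∈ s) :
    C x + μ * ‖x‖ ^ 2 + μ * ‖z - x‖ ^ 2 ≤ C z + μ * ‖z‖ ^ 2 := by
  have hA0 : 0 ≤ μ * ‖z - x‖ ^ 2 := by positivity
  have step : ∀ t : ℝ, 0 < t → t ≤ 1 →
      (1 - t) * (μ * ‖z - x‖ ^ 2) ≤ (C z + μ * ‖z‖ ^ 2) - (C x + μ * ‖x‖ ^ 2) := by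
    intro t ht0 ht1
    have hw : (1 - t) • x + t • z ∈ s :=
      hs hx hz (by linarith) (le_of_lt ht0) (by ring)
    have hmin' := hmin hw
    simp only [Set.mem_setOf_eq] at hmin'
    have hCw : C ((1 - t) • x + t • z) ≤ (1 - t) * C x + t * C z := by
      have := hC.2 (Set.mem_univ x) (Set.mem_univ z) (by linarith : (0:ℝ) ≤ 1 - t)
        (le_of_lt ht0) (by ring)
      simpa [smul_eq_mul] using this
    rw [norm_combo x z t] at hmin'
    have key : t * ((1 - t) * (μ * ‖z - x‖ ^ 2))
        ≤ t * ((C z + μ * ‖z‖ ^ 2) - (C x + μ * ‖x‖ ^ 2)) := by nlinarith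
    exact le_of_mul_le_mul_left key ht0
  have hD0 : 0 ≤ (C z + μ * ‖z‖ ^ 2) - (C x + μ * ‖x‖ ^ 2) := by
    have := step 1 one_pos le_rfl; linarith
  have hAD : μ * ‖z - x‖ ^ 2 ≤ (C z + μ * ‖z‖ ^ 2) - (C x + μ * ‖x‖ ^ 2) := by
    refine le_of_forall_pos_le_add ?_
    intro ε hε
    rcases le_or_gt (μ * ‖z - x‖ ^ 2) ε with h | h
    · linarith
    · have hApos : 0 < μ * ‖z - x‖ ^ 2 := lt_trans hε h
      have ht0 : 0 < ε / (μ * ‖z - x‖ ^ 2) := div_pos hε hApos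
      have ht1 : ε / (μ * ‖z - x‖ ^ 2) ≤ 1 := by
        rw [div_le_one hApos]; linarith
      have hst := step _ ht0 ht1
      have heq : (1 - ε / (μ * ‖z - x‖ ^ 2)) * (μ * ‖z - x‖ ^ 2)
          = μ * ‖z - x‖ ^ 2 - ε := by rw [sub_mul, div_mul_cancel₀ _ hApos.ne', one_mul]
      linarith [heq ▸ hst]
  linarith

theorem leave_one_out_perturbation_bound {p n : ℕ}
    (Θ : Set (EuclideanSpace ℝ (Fin p)))
    (hne : Θ.Nonempty) (hcl : IsClosed Θ) (hconv : Convex ℝ Θ)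
    (ℓ : ℝ → ℝ → ℝ)
    (hℓnn : ∀ y z, 0 ≤ ℓ y z)
    (hℓconv : ∀ y, ConvexOn ℝ Set.univ (ℓ y))
    (hℓsmooth : ∀ y, ContDiff ℝ 2 (ℓ y))
    (r0 : EuclideanSpace ℝ (Fin p) → ℝ)
    (hr0nn : ∀ β, 0 ≤ r0 β) (hr0conv : ConvexOn ℝ Set.univ r0)
    (K : ℝ≥0) (hr0lip : LipschitzWith K r0)
    (lam η : ℝ) (hlam : 0 < lam) (hη : η ∈ Set.Ioo (0 : ℝ) 1)
    (y : Fin n → ℝ) (x : Fin n → EuclideanSpace ℝ (Fin p))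
    (bhat : EuclideanSpace ℝ (Fin p)) (hbmem : bhat ∈ Θ)
    (hbmin : IsMinOn
      (fun β => ∑ j, ℓ (y j) ⟪x j, β⟫ + lam * ((1 - η) * r0 β + η * ‖β‖ ^ 2))
      Θ bhat)
    (i : Fin n) (blo : EuclideanSpace ℝ (Fin p)) (hlomem : blo ∈ Θ)
    (hlomin : IsMinOn
      (fun β => ∑ j ∈ Finset.univ.erase i, ℓ (y j) ⟪x j, β⟫
        + lam * ((1 - η) * r0 β + η * ‖β‖ ^ 2))
      Θ blo) :
    ‖bhat - blo‖ ≤ |deriv (ℓ (y i)) ⟪x i, blo⟫| * ‖x i‖ / min (2 * lam * η) 1 := by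
  obtain ⟨hη0, hη1⟩ := hη
  set μ : ℝ := lam * η with hμdef
  have hμ : 0 ≤ μ := by positivity
  -- convexity of the non-quadratic parts
  have hterm : ∀ j : Fin n,
      ConvexOn ℝ Set.univ fun β : EuclideanSpace ℝ (Fin p) => ℓ (y j) ⟪x j, β⟫ := by
    intro j
    refine ⟨convex_univ, fun a _ b _ ta tb hta htb hab => ?_⟩
    simp only [inner_add_right, inner_smul_right, smul_eq_mul]
    simpa [smul_eq_mul] using
      (hℓconv (y j)).2 (Set.mem_univ (⟪x j, a⟫)) (Set.mem_univ (⟪x j, b⟫)) hta htb hab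
  have hsumconv : ∀ s : Finset (Fin n),
      ConvexOn ℝ Set.univ fun β : EuclideanSpace ℝ (Fin p) => ∑ j ∈ s, ℓ (y j) ⟪x j, β⟫ := by
    intro s
    induction s using Finset.induction with
    | empty => simpa using convexOn_const (0:ℝ) convex_univ
    | insert _ _ hj ih =>
        simp only [Finset.sum_insert hj]
        exact (hterm _).add ih
  have hr0' : ConvexOn ℝ Set.univ fun β : EuclideanSpace ℝ (Fin p) =>
      lam * (1 - η) * r0 β := by
    simpa [smul_eq_mul] using hr0conv.smul (mul_nonneg hlam.le (by linarith) : (0:ℝ) ≤ lam * (1 - η))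
  set C1 : EuclideanSpace ℝ (Fin p) → ℝ :=
    fun β => (∑ j, ℓ (y j) ⟪x j, β⟫) + lam * (1 - η) * r0 β with hC1
  set C2 : EuclideanSpace ℝ (Fin p) → ℝ :=
    fun β => (∑ j ∈ Finset.univ.erase i, ℓ (y j) ⟪x j, β⟫) + lam * (1 - η) * r0 β with hC2
  have hC1conv : ConvexOn ℝ Set.univ C1 := (hsumconv _).add hr0'
  have hC2conv : ConvexOn ℝ Set.univ C2 := (hsumconv _).add hr0'
  have hbmin' : IsMinOn (fun β => C1 β + μ * ‖β‖ ^ 2) Θ bhat := by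
    have : (fun β : EuclideanSpace ℝ (Fin p) =>
        ∑ j, ℓ (y j) ⟪x j, β⟫ + lam * ((1 - η) * r0 β + η * ‖β‖ ^ 2))
        = fun β => C1 β + μ * ‖β‖ ^ 2 := by
      funext β; simp only [hC1, hμdef]; ring
    rwa [this] at hbmin
  have hlomin' : IsMinOn (fun β => C2 β + μ * ‖β‖ ^ 2) Θ blo := by
    have : (fun β : EuclideanSpace ℝ (Fin p) =>
        ∑ j ∈ Finset.univ.erase i, ℓ (y j) ⟪x j, β⟫
          + lam * ((1 - η) * r0 β + η * ‖β‖ ^ 2))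
        = fun β => C2 β + μ * ‖β‖ ^ 2 := by
      funext β; simp only [hC2, hμdef]; ring
    rwa [this] at hlomin
  have h1 := strong_min hconv hC1conv hμ hbmem hbmin' hlomem
  have h2 := strong_min hconv hC2conv hμ hlomem hlomin' hbmem
  -- relate C1 and C2
  have hsplit : ∀ β : EuclideanSpace ℝ (Fin p), C1 β = C2 β + ℓ (y i) ⟪x i, β⟫ := by
    intro β
    have := Finset.sum_erase_add Finset.univ
      (fun j => ℓ (y j) ⟪x j, β⟫) (Finset.mem_univ i)
    simp only [hC1, hC2]
    linarith
  have hrev : ‖blo - bhat‖ = ‖bhat - blo‖ := norm_sub_rev _ _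
  have hcomb : 2 * μ * ‖bhat - blo‖ ^ 2
      ≤ ℓ (y i) ⟪x i, blo⟫ - ℓ (y i) ⟪x i, bhat⟫ := by
    have e1 := hsplit blo
    have e2 := hsplit bhat
    rw [hrev] at h1
    linarith
  -- derivative bound via convexity
  have hdiff : Differentiable ℝ (ℓ (y i)) :=
    (hℓsmooth (y i)).differentiable (by norm_num)
  have hsub := subgrad_ineq (ℓ (y i)) (hℓconv (y i)) hdiff ⟪x i, blo⟫ ⟪x i, bhat⟫
  have hcs : |⟪x i, blo⟫ - ⟪x i, bhat⟫| ≤ ‖x i‖ * ‖bhat - blo‖ := by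
    have : ⟪x i, blo⟫ - ⟪x i, bhat⟫ = ⟪x i, blo - bhat⟫ := by
      rw [inner_sub_right]
    rw [this]
    calc |⟪x i, blo - bhat⟫| ≤ ‖x i‖ * ‖blo - bhat‖ := abs_real_inner_le_norm _ _
      _ = ‖x i‖ * ‖bhat - blo‖ := by rw [hrev]
  have hgrad : ℓ (y i) ⟪x i, blo⟫ - ℓ (y i) ⟪x i, bhat⟫
      ≤ |deriv (ℓ (y i)) ⟪x i, blo⟫| * (‖x i‖ * ‖bhat - blo‖) := by
    have h3 : deriv (ℓ (y i)) ⟪x i, blo⟫ * (⟪x i, blo⟫ - ⟪x i, bhat⟫)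
        ≤ |deriv (ℓ (y i)) ⟪x i, blo⟫| * (‖x i‖ * ‖bhat - blo‖) := by
      calc deriv (ℓ (y i)) ⟪x i, blo⟫ * (⟪x i, blo⟫ - ⟪x i, bhat⟫)
          ≤ |deriv (ℓ (y i)) ⟪x i, blo⟫ * (⟪x i, blo⟫ - ⟪x i, bhat⟫)| := le_abs_self _
        _ = |deriv (ℓ (y i)) ⟪x i, blo⟫| * |⟪x i, blo⟫ - ⟪x i, bhat⟫| := abs_mul _ _
        _ ≤ |deriv (ℓ (y i)) ⟪x i, blo⟫| * (‖x i‖ * ‖bhat - blo‖) :=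
            mul_le_mul_of_nonneg_left hcs (abs_nonneg _)
    nlinarith [hsub]
  set R : ℝ := |deriv (ℓ (y i)) ⟪x i, blo⟫| * ‖x i‖ with hR
  have hR0 : 0 ≤ R := by positivity
  have hm : 0 < min (2 * lam * η) 1 := lt_min (by positivity) one_pos
  rcases eq_or_lt_of_le (norm_nonneg (bhat - blo)) with hd | hd
  · rw [← hd]; exact div_nonneg hR0 hm.le
  · have hkey : 2 * μ * ‖bhat - blo‖ ^ 2 ≤ R * ‖bhat - blo‖ := by
      calc 2 * μ * ‖bhat - blo‖ ^ 2 ≤ ℓ (y i) ⟪x i, blo⟫ - ℓ (y i) ⟪x i, bhat⟫ := hcomb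
        _ ≤ R * ‖bhat - blo‖ := by rw [hR]; linarith [hgrad]
    have h4 : 2 * lam * η * ‖bhat - blo‖ ≤ R := by
      have : (2 * lam * η * ‖bhat - blo‖) * ‖bhat - blo‖ ≤ R * ‖bhat - blo‖ := by
        nlinarith [hkey]
      exact le_of_mul_le_mul_right this hd
    rw [le_div_iff₀ hm]
    calc ‖bhat - blo‖ * min (2 * lam * η) 1 ≤ ‖bhat - blo‖ * (2 * lam * η) :=
        mul_le_mul_of_nonneg_left (min_le_left _ _) (norm_nonneg _)
      _ = 2 * lam * η * ‖bhat - blo‖ := by ring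
      _ ≤ R := h4
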